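/- (Relators of a free-by-cyclic presentation are pairwise non-conjugate and not conjugate to inverses.) Let n ≥ 1 and let G be the free group on the set {x₁, …, xₙ, t} (formally, the free group on Fin n ⊕ Unit, with t the generator coming from Unit). Let ι denote the inclusion homomorphism from the free group on {x₁, …, xₙ} into G, and let φ be an automorphism of the free group on {x₁, …, xₙ}. For each i define rᵢ := t · ι(xᵢ) · t⁻¹ · ι(φ(xᵢ))⁻¹ ∈ G. Then: (a) for all indices i, j, if rᵢ is conjugate to rⱼ in G, then i = j; and (b) for all indices i, j, the element rᵢ is not conjugate to rⱼ⁻¹ in G. -/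

import Mathlib

open Multiplicative SemidirectProduct

namespace FBC

variable (n : ℕ)

abbrev V := ℤ → Fin n → ℤ

def sng (m : ℤ) (v : Fin n → ℤ) : V n := fun p => if p = m then v else 0

def shiftM (k : ℤ) : MulAut (Multiplicative (V n)) where
  toFun w := ofAdd (fun p => toAdd w (p - k))
  invFun w := ofAdd (fun p => toAdd w (p + k))
  left_inv w := by
    apply toAdd.injective; funext p; simp
  right_inv w := by
    apply toAdd.injective; funext p; simp
  map_mul' _ _ := rfl

def θ : Multiplicative ℤ →* MulAut (Multiplicative (V n)) where
  toFun k := shiftM n (toAdd k)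
  map_one' := by
    ext w : 1
    apply toAdd.injective; funext p; simp [shiftM]
  map_mul' k l := by
    ext w : 1
    apply toAdd.injective; funext p
    simp [shiftM, sub_sub, MulAut.mul_apply]

abbrev H := Multiplicative (V n) ⋊[θ n] Multiplicative ℤ

def ψ : FreeGroup (Fin n ⊕ Unit) →* H n :=
  FreeGroup.lift (Sum.elim
    (fun i => SemidirectProduct.inl (ofAdd (sng n 0 (Pi.single i 1))))
    (fun _ => SemidirectProduct.inr (ofAdd 1)))

def ab : FreeGroup (Fin n) →* Multiplicative (Fin n → ℤ) :=
  FreeGroup.lift (fun i => ofAdd (Pi.single i 1))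

def emb : Multiplicative (Fin n → ℤ) →* Multiplicative (V n) where
  toFun v := ofAdd (sng n 0 (toAdd v))
  map_one' := by apply toAdd.injective; funext p; simp [sng]
  map_mul' v w := by
    apply toAdd.injective; funext p; simp [sng]; split <;> simp

lemma psi_inl (w : FreeGroup (Fin n)) :
    ψ n (FreeGroup.map Sum.inl w) = SemidirectProduct.inl (emb n (ab n w)) := by
  have h : (ψ n).comp (FreeGroup.map Sum.inl) =
      (SemidirectProduct.inl).comp ((emb n).comp (ab n)) := by
    apply FreeGroup.ext_hom; intro a
    simp [ψ, ab, emb]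
  exact DFunLike.congr_fun h w

end FBC

namespace FBC
variable (n : ℕ)

variable (φ : FreeGroup (Fin n) ≃* FreeGroup (Fin n))

def a (i : Fin n) : Fin n → ℤ := toAdd (ab n (φ (FreeGroup.of i)))

lemma a_ne_zero (i : Fin n) : a n φ i ≠ 0 := by
  set b : Fin n → Fin n → ℤ := fun j => toAdd (ab n (φ.symm (FreeGroup.of j))) with hb
  have hB : ∃ B : Multiplicative (Fin n → ℤ) →* Multiplicative (Fin n → ℤ),
      ∀ v : Fin n → ℤ, B (ofAdd v) = ofAdd (∑ j, v j • b j) := by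
    refine ⟨⟨⟨fun v => ofAdd (∑ j, toAdd v j • b j), ?_⟩, ?_⟩, fun _ => rfl⟩
    · apply toAdd.injective; simp
    · intro v w
      apply toAdd.injective
      simp [add_smul, Finset.sum_add_distrib]
  obtain ⟨B, hBv⟩ := hB
  have key : B.comp (ab n) = (ab n).comp φ.symm.toMonoidHom := by
    apply FreeGroup.ext_hom; intro j
    simp only [MonoidHom.comp_apply, MulEquiv.coe_toMonoidHom]
    rw [show ab n (FreeGroup.of j) = ofAdd (Pi.single j 1) from FreeGroup.lift_apply_of, hBv,
      show (ab n) (φ.symm (FreeGroup.of j)) = ofAdd (b j) from (ofAdd_toAdd _).symm]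
    apply toAdd.injective
    simp [Pi.single_apply, ite_smul]
  intro hzero
  have h1 : ab n (φ (FreeGroup.of i)) = 1 := by
    have : toAdd (ab n (φ (FreeGroup.of i))) = 0 := hzero
    apply toAdd.injective; simpa using this
  have := DFunLike.congr_fun key (φ (FreeGroup.of i))
  rw [MonoidHom.comp_apply, h1, map_one] at this
  simp only [MonoidHom.comp_apply, MulEquiv.coe_toMonoidHom, MulEquiv.symm_apply_apply] at this
  have h2 : (1 : Multiplicative (Fin n → ℤ)) = ofAdd (Pi.single i 1) := by
    rw [this, ab]; exact FreeGroup.lift_apply_of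
  have h3 := congrArg (fun z : Multiplicative (Fin n → ℤ) => toAdd z i) h2
  simp at h3

def w (i : Fin n) : V n := sng n 1 (Pi.single i 1) - sng n 0 (a n φ i)

lemma psi_r (i : Fin n) :
    ψ n (FreeGroup.of (Sum.inr ()) * FreeGroup.map Sum.inl (FreeGroup.of i) *
        (FreeGroup.of (Sum.inr ()))⁻¹ * (FreeGroup.map Sum.inl (φ (FreeGroup.of i)))⁻¹) =
      SemidirectProduct.inl (ofAdd (w n φ i)) := by
  have ht : ψ n (FreeGroup.of (Sum.inr ())) = SemidirectProduct.inr (ofAdd 1) :=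
    FreeGroup.lift_apply_of
  rw [map_mul, map_mul, map_mul, map_inv, map_inv, ht, psi_inl, psi_inl]
  have hab : ab n (FreeGroup.of i) = ofAdd (Pi.single i 1) := FreeGroup.lift_apply_of
  rw [hab]
  have h1 : SemidirectProduct.inr (G := Multiplicative ℤ) (ofAdd 1) *
      SemidirectProduct.inl (emb n (ofAdd (Pi.single i 1))) *
      (SemidirectProduct.inr (ofAdd 1) : H n)⁻¹ =
      SemidirectProduct.inl (θ n (ofAdd 1) (emb n (ofAdd (Pi.single i 1)))) :=
    (SemidirectProduct.inl_aut _ _).symm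
  rw [mul_assoc, mul_assoc, ← mul_assoc, ← mul_assoc, h1, ← map_inv, ← map_mul]
  congr 1
  apply toAdd.injective
  funext p
  have : ab n (φ (FreeGroup.of i)) = ofAdd (a n φ i) := (ofAdd_toAdd _).symm
  rw [this]
  simp [θ, shiftM, emb, sng, w, a, sub_eq_zero, sub_eq_add_neg]
  by_cases hp : p = 1
  · simp [hp]
  · have hp' : ¬ (p + -1 = 0) := by omega
    simp [hp, hp']

lemma conj_extract (c : H n) (x y : V n)
    (h : c * SemidirectProduct.inl (ofAdd x) * c⁻¹ = SemidirectProduct.inl (ofAdd y)) :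
    ∀ p, x (p - toAdd c.right) = y p := by
  intro p
  have := congrArg (fun z : H n => (toAdd z.left) p) h
  rw [SemidirectProduct.mul_left, SemidirectProduct.mul_left, SemidirectProduct.inv_left,
    SemidirectProduct.mul_right, SemidirectProduct.left_inl, SemidirectProduct.left_inl,
    SemidirectProduct.right_inl] at this
  simpa [SemidirectProduct.mul_left, SemidirectProduct.inv_left, θ, shiftM] using this

end FBC

namespace FBC
variable (n : ℕ) (φ : FreeGroup (Fin n) ≃* FreeGroup (Fin n))

lemma w_support (i : Fin n) (p : ℤ) (h0 : p ≠ 0) (h1 : p ≠ 1) : w n φ i p = 0 := by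
  simp [w, sng, h0, h1]

end FBC

open FBC

/-- **Relators of a free-by-cyclic presentation are pairwise non-conjugate and not conjugate to
inverses.** Let `G` be the free group on `x₁, …, xₙ, t`, let `ι` be the inclusion of the free
group on `x₁, …, xₙ` into `G`, and let `φ` be an automorphism of the free group on
`x₁, …, xₙ`. Set `rᵢ = t·ι(xᵢ)·t⁻¹·ι(φ(xᵢ))⁻¹`. Then (a) `rᵢ` conjugate to `rⱼ` implies
`i = j`, and (b) `rᵢ` is never conjugate to `rⱼ⁻¹`. -/
theorem free_by_cyclic_relators_nonconjugate (n : ℕ) (hn : 1 ≤ n)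
    (φ : FreeGroup (Fin n) ≃* FreeGroup (Fin n))
    (r : Fin n → FreeGroup (Fin n ⊕ Unit))
    (hr : ∀ i : Fin n, r i =
      FreeGroup.of (Sum.inr ()) * FreeGroup.map Sum.inl (FreeGroup.of i) *
        (FreeGroup.of (Sum.inr ()))⁻¹ * (FreeGroup.map Sum.inl (φ (FreeGroup.of i)))⁻¹) :
    (∀ i j : Fin n, IsConj (r i) (r j) → i = j) ∧
    (∀ i j : Fin n, ¬ IsConj (r i) ((r j)⁻¹)) := by
  classical
  constructor
  · intro i j hc
    rw [hr i, hr j] at hc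
    have hc' := (ψ n).map_isConj hc
    rw [psi_r n φ i, psi_r n φ j] at hc'
    obtain ⟨c, hcc⟩ := isConj_iff.mp hc'
    have hpt := conj_extract n c _ _ hcc
    obtain ⟨m, hm⟩ := Function.ne_iff.mp (a_ne_zero n φ j)
    have hk1 : 1 - toAdd c.right = 0 ∨ 1 - toAdd c.right = 1 := by
      by_contra hcon
      push_neg at hcon
      have h := hpt 1
      rw [w_support n φ i _ hcon.1 hcon.2] at h
      have h' := congrFun h j
      simp [w, sng, Pi.single_apply] at h'
    have hk0 : 0 - toAdd c.right = 0 ∨ 0 - toAdd c.right = 1 := by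
      by_contra hcon
      push_neg at hcon
      have h := hpt 0
      rw [w_support n φ i _ hcon.1 hcon.2] at h
      have h' := congrFun h m
      simp [w, sng] at h'
      exact hm (by simpa using h')
    have hk : toAdd c.right = 0 := by omega
    have h := congrFun (by simpa [hk] using hpt 1 : w n φ i 1 = w n φ j 1) i
    by_cases hij : i = j
    · exact hij
    · simp [w, sng, Pi.single_apply, hij] at h
  · intro i j hc
    rw [hr i, hr j] at hc
    have hc' := (ψ n).map_isConj hc
    rw [map_inv, psi_r n φ i, psi_r n φ j] at hc'
    have hinv : (SemidirectProduct.inl (ofAdd (w n φ j)) : H n)⁻¹ =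
        SemidirectProduct.inl (ofAdd (-(w n φ j))) := by
      rw [ofAdd_neg, map_inv]
    rw [hinv] at hc'
    obtain ⟨c, hcc⟩ := isConj_iff.mp hc'
    have hpt := conj_extract n c _ _ hcc
    obtain ⟨m, hm⟩ := Function.ne_iff.mp (a_ne_zero n φ j)
    have hk1 : 1 - toAdd c.right = 0 ∨ 1 - toAdd c.right = 1 := by
      by_contra hcon
      push_neg at hcon
      have h := hpt 1
      rw [w_support n φ i _ hcon.1 hcon.2] at h
      have h' := congrFun h j
      simp [w, sng, Pi.single_apply] at h'
    have hk0 : 0 - toAdd c.right = 0 ∨ 0 - toAdd c.right = 1 := by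
      by_contra hcon
      push_neg at hcon
      have h := hpt 0
      rw [w_support n φ i _ hcon.1 hcon.2] at h
      have h' := congrFun h m
      simp [w, sng] at h'
      exact hm (by simpa using h'.symm)
    have hk : toAdd c.right = 0 := by omega
    have h := congrFun (by simpa [hk] using hpt 1 : w n φ i 1 = -(w n φ j 1)) i
    by_cases hij : i = j
    · simp [w, sng, Pi.single_apply, hij] at h
    · simp [w, sng, Pi.single_apply, hij] at h
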